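/- If S and T are measurable subsets of ℝ with finite Lebesgue measure, then |D(S) − D(T)| ≤ 2λ(S ⊕ T), where S ⊕ T := (S \ T) ∪ (T \ S) is the symmetric difference of S and T. -/

import Mathlib

open MeasureTheory

/-- A set `C ⊆ ℝ` is symmetric if there is a center `c` with `c + x ∈ C ↔ c - x ∈ C`. -/
def IsSymmetricSet (C : Set ℝ) : Prop := ∃ c : ℝ, ∀ x : ℝ, c + x ∈ C ↔ c - x ∈ C

/-- `DD A` is the supremum of measures of measurable symmetric subsets of `A`. -/
noncomputable def DD (A : Set ℝ) : ℝ :=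
  sSup {m : ℝ | ∃ C : Set ℝ, C ⊆ A ∧ MeasurableSet C ∧ IsSymmetricSet C ∧ m = (volume C).toReal}

/-- `Δ ε` is the infimum of `DD A` over measurable `A ⊆ [0,1)` with measure `ε`. -/
noncomputable def Δ (ε : ℝ) : ℝ :=
  sInf {d : ℝ | ∃ A : Set ℝ, A ⊆ Set.Ico (0:ℝ) 1 ∧ MeasurableSet A ∧
    volume A = ENNReal.ofReal ε ∧ d = DD A}

lemma DD_zero_mem (A : Set ℝ) :
    (0:ℝ) ∈ {m : ℝ | ∃ C : Set ℝ, C ⊆ A ∧ MeasurableSet C ∧ IsSymmetricSet C ∧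
      m = (volume C).toReal} :=
  ⟨∅, Set.empty_subset A, MeasurableSet.empty, ⟨0, fun x => by simp⟩, by simp⟩

lemma DD_bddAbove (A : Set ℝ) (hA : volume A < ⊤) :
    BddAbove {m : ℝ | ∃ C : Set ℝ, C ⊆ A ∧ MeasurableSet C ∧ IsSymmetricSet C ∧
      m = (volume C).toReal} := by
  refine ⟨(volume A).toReal, ?_⟩
  rintro m ⟨C, hCA, -, -, rfl⟩
  exact ENNReal.toReal_mono hA.ne (measure_mono hCA)

lemma DD_nonneg (A : Set ℝ) (hA : volume A < ⊤) : 0 ≤ DD A :=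
  le_csSup (DD_bddAbove A hA) (DD_zero_mem A)

lemma DD_le_key (S T : Set ℝ) (hT : MeasurableSet T)
    (hSfin : volume S < ⊤) (hTfin : volume T < ⊤) :
    DD S ≤ DD T + 2 * (volume ((S \ T) ∪ (T \ S))).toReal := by
  set Δ' : Set ℝ := (S \ T) ∪ (T \ S) with hΔ'
  apply Real.sSup_le
  · rintro m ⟨C, hCS, hCmeas, ⟨c, hc⟩, rfl⟩
    set σ : ℝ → ℝ := fun x => 2*c - x with hσdef
    have hσmeas : Measurable σ := measurable_const.sub measurable_id
    have hσσ : ∀ x, σ (σ x) = x := fun x => by simp only [hσdef]; ring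
    set B : Set ℝ := C \ T with hBdef
    have hBmeas : MeasurableSet B := hCmeas.diff hT
    set E : Set ℝ := B ∪ σ ⁻¹' B with hEdef
    have hEmeas : MeasurableSet E := hBmeas.union (hσmeas hBmeas)
    set C' : Set ℝ := C \ E with hC'def
    have hC'meas : MeasurableSet C' := hCmeas.diff hEmeas
    have hC'T : C' ⊆ T := by
      rintro x ⟨hxC, hxE⟩
      by_contra hxT
      exact hxE (Or.inl ⟨hxC, hxT⟩)
    -- symmetry of C under σ
    have hCσ : ∀ x, x ∈ C ↔ σ x ∈ C := by
      intro x
      have h := hc (x - c)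
      rw [show c + (x - c) = x by ring, show c - (x - c) = 2*c - x by ring] at h
      exact h
    have hEσ : ∀ x, x ∈ E ↔ σ x ∈ E := by
      intro x
      simp only [hEdef, Set.mem_union, Set.mem_preimage, hσσ x]
      exact Or.comm
    have hC'sym : IsSymmetricSet C' := by
      refine ⟨c, fun x => ?_⟩
      have hs : σ (c + x) = c - x := by simp only [hσdef]; ring
      constructor
      · rintro ⟨h1, h2⟩
        exact ⟨by rw [← hs]; exact (hCσ _).1 h1, by rw [← hs]; exact fun h => h2 ((hEσ _).2 h)⟩
      · rintro ⟨h1, h2⟩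
        rw [← hs] at h1 h2
        exact ⟨(hCσ _).2 h1, fun h => h2 ((hEσ _).1 h)⟩
    -- measure computations
    have hpre : volume (σ ⁻¹' B) = volume B := by
      have : σ = fun t => (2*c) - t := rfl
      rw [this]
      exact (Measure.measurePreserving_sub_left volume (2*c)).measure_preimage
        hBmeas.nullMeasurableSet
    have hBΔ : volume B ≤ volume Δ' := by
      apply measure_mono
      intro x hx
      exact Or.inl ⟨hCS hx.1, hx.2⟩
    have hE2 : volume E ≤ 2 * volume Δ' := by
      calc volume E ≤ volume B + volume (σ ⁻¹' B) := measure_union_le _ _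
        _ = 2 * volume B := by rw [hpre, two_mul]
        _ ≤ 2 * volume Δ' := by exact mul_le_mul_right hBΔ 2
    have hCsub : C ⊆ C' ∪ E := by
      intro x hx
      by_cases hxE : x ∈ E
      · exact Or.inr hxE
      · exact Or.inl ⟨hx, hxE⟩
    have hCle : volume C ≤ volume C' + 2 * volume Δ' := by
      calc volume C ≤ volume (C' ∪ E) := measure_mono hCsub
        _ ≤ volume C' + volume E := measure_union_le _ _
        _ ≤ volume C' + 2 * volume Δ' := add_le_add_right hE2 _
    have hΔfin : volume Δ' < ⊤ :=
      lt_of_le_of_lt (measure_union_le _ _)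
        (ENNReal.add_lt_top.2 ⟨lt_of_le_of_lt (measure_mono Set.diff_subset) hSfin,
          lt_of_le_of_lt (measure_mono Set.diff_subset) hTfin⟩)
    have hC'fin : volume C' < ⊤ :=
      lt_of_le_of_lt (measure_mono (hC'T)) hTfin
    have hreal : (volume C).toReal ≤ (volume C').toReal + 2 * (volume Δ').toReal := by
      have h1 : (volume C).toReal ≤ (volume C' + 2 * volume Δ').toReal := by
        apply ENNReal.toReal_mono _ hCle
        exact (ENNReal.add_lt_top.2 ⟨hC'fin,
          ENNReal.mul_lt_top ENNReal.ofNat_lt_top hΔfin⟩).ne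
      calc (volume C).toReal ≤ (volume C' + 2 * volume Δ').toReal := h1
        _ = (volume C').toReal + 2 * (volume Δ').toReal := by
            rw [ENNReal.toReal_add hC'fin.ne
              (ENNReal.mul_lt_top ENNReal.ofNat_lt_top hΔfin).ne, ENNReal.toReal_mul]
            simp
    have hC'DD : (volume C').toReal ≤ DD T :=
      le_csSup (DD_bddAbove T hTfin) ⟨C', hC'T, hC'meas, hC'sym, rfl⟩
    linarith
  · exact add_nonneg (DD_nonneg T hTfin)
      (mul_nonneg (by norm_num) ENNReal.toReal_nonneg)

theorem D_symmDiff_lipschitz (S T : Set ℝ) (hS : MeasurableSet S) (hT : MeasurableSet T)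
    (hSfin : volume S < ⊤) (hTfin : volume T < ⊤) :
    |DD S - DD T| ≤ 2 * (volume ((S \ T) ∪ (T \ S))).toReal := by
  rw [abs_sub_le_iff]
  constructor
  · linarith [DD_le_key S T hT hSfin hTfin]
  · have := DD_le_key T S hS hTfin hSfin
    rw [Set.union_comm] at this
    linarith
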